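/- Let f : ℝ^n → ℝ be twice continuously differentiable and μ-strongly convex with μ > 0, g : ℝ^n → (-∞, ∞] a proper closed convex function, ν > 0, and let x* satisfy F_ν(x*) = 0. Suppose ∂F_ν has nonempty compact images, is upper-semicontinuous at x*, and is a linear Newton approximation of F_ν at x*, i.e., ‖F_ν(x*) − F_ν(y) − A(x* − y)‖₂ = o(‖x* − y‖₂) as y → x*, uniformly over A ∈ ∂F_ν(y); suppose also every element of ∂F_ν(x) is nonsingular for every x ∈ ℝ^n. Then there exists ε > 0 such that every sequence (x^(k)) with ‖x^(1) − x*‖₂ < ε and x^(k+1) = x^(k) − A_k^{-1} F_ν(x^(k)) for some A_k ∈ ∂F_ν(x^(k)) converges to x* superlinearly: x^(k) → x* and ‖x^(k+1) − x*‖₂ = o(‖x^(k) − x*‖₂) as k → ∞. -/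

import Mathlib

open Filter Topology RealInnerProductSpace

/-- The B-subdifferential of a map `F : ℝ^n → ℝ^n` at `x`: the set of limits of
derivatives `∇F(x^(k))` along sequences `x^(k) → x` of differentiability points of `F`. -/
def Bsubdiff {n : ℕ} (F : EuclideanSpace ℝ (Fin n) → EuclideanSpace ℝ (Fin n))
    (x : EuclideanSpace ℝ (Fin n)) :
    Set (EuclideanSpace ℝ (Fin n) →L[ℝ] EuclideanSpace ℝ (Fin n)) :=
  {V | ∃ u : ℕ → EuclideanSpace ℝ (Fin n),
      Filter.Tendsto u Filter.atTop (nhds x) ∧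
      (∀ k, DifferentiableAt ℝ F (u k)) ∧
      Filter.Tendsto (fun k => fderiv ℝ F (u k)) Filter.atTop (nhds V)}

/-- The proximal-gradient residual `F_ν(x) = x − prox_{νg}(x − ν ∇f(x))`,
where `prox` denotes the proximal map of `νg`. -/
noncomputable def Fnu {n : ℕ} (f : EuclideanSpace ℝ (Fin n) → ℝ)
    (prox : EuclideanSpace ℝ (Fin n) → EuclideanSpace ℝ (Fin n)) (ν : ℝ)
    (x : EuclideanSpace ℝ (Fin n)) : EuclideanSpace ℝ (Fin n) :=
  x - prox (x - ν • gradient f x)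

/-- The set-valued map `∂F_ν(x) = { I − V(I − ν ∇²f(x)) : V ∈ ∂_B prox_{νg}(x − ν∇f(x)) }`. -/
noncomputable def DFnu {n : ℕ} (f : EuclideanSpace ℝ (Fin n) → ℝ)
    (prox : EuclideanSpace ℝ (Fin n) → EuclideanSpace ℝ (Fin n)) (ν : ℝ)
    (x : EuclideanSpace ℝ (Fin n)) :
    Set (EuclideanSpace ℝ (Fin n) →L[ℝ] EuclideanSpace ℝ (Fin n)) :=
  {U | ∃ V ∈ Bsubdiff prox (x - ν • gradient f x),
    U = 1 - V * (1 - ν • fderiv ℝ (gradient f) x)}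


section Statement14Aux

/-- In a normed ring, the inverse of a unit applied-norm bound transfers to nearby units. -/
theorem statement14_inv_norm_bound {R : Type*} [NormedRing R] (u v : Rˣ) {M : ℝ} (hM : 0 < M)
    (hu : ‖(↑u⁻¹ : R)‖ ≤ M) (hd : ‖(↑v : R) - ↑u‖ ≤ 1 / (2 * M)) :
    ‖(↑v⁻¹ : R)‖ ≤ 2 * M := by
  have key : (↑v⁻¹ : R) = ↑u⁻¹ + ↑v⁻¹ * ((↑u : R) - ↑v) * ↑u⁻¹ := by
    have h1 : (↑v⁻¹ : R) * ((↑u : R) - ↑v) * ↑u⁻¹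
        = ↑v⁻¹ * ↑u * ↑u⁻¹ - ↑v⁻¹ * ↑v * ↑u⁻¹ := by rw [mul_sub, sub_mul]
    rw [h1, mul_assoc, Units.mul_inv, mul_one, Units.inv_mul, one_mul]
    abel
  have hmul : ‖(↑v⁻¹ : R) * ((↑u : R) - ↑v) * ↑u⁻¹‖
      ≤ ‖(↑v⁻¹ : R)‖ * ‖(↑u : R) - ↑v‖ * ‖(↑u⁻¹ : R)‖ :=
    (norm_mul_le _ _).trans (mul_le_mul_of_nonneg_right (norm_mul_le _ _) (norm_nonneg _))
  have h2 : ‖(↑u : R) - ↑v‖ ≤ 1 / (2 * M) := by rwa [norm_sub_rev]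
  have h3 : ‖(↑v⁻¹ : R)‖ * ‖(↑u : R) - ↑v‖ * ‖(↑u⁻¹ : R)‖
      ≤ ‖(↑v⁻¹ : R)‖ * (1 / (2 * M)) * M :=
    mul_le_mul (mul_le_mul_of_nonneg_left h2 (norm_nonneg _)) hu (norm_nonneg _) (by positivity)
  have h4 : ‖(↑v⁻¹ : R)‖ ≤ ‖(↑u⁻¹ : R)‖ + ‖(↑v⁻¹ : R) * ((↑u : R) - ↑v) * ↑u⁻¹‖ :=
    le_trans (le_of_eq (congrArg norm key)) (norm_add_le _ _)
  have hhalf : ‖(↑v⁻¹ : R)‖ * (1 / (2 * M)) * M = ‖(↑v⁻¹ : R)‖ / 2 := by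
    field_simp
  rw [hhalf] at h3
  linarith

/-- For a bijective continuous linear map on a Euclidean space, `Ring.inverse A` is a
left inverse. -/
theorem statement14_inv_apply {n : ℕ}
    (A : EuclideanSpace ℝ (Fin n) →L[ℝ] EuclideanSpace ℝ (Fin n))
    (h : Function.Bijective A) (w : EuclideanSpace ℝ (Fin n)) :
    (Ring.inverse A) (A w) = w := by
  obtain ⟨u, hu⟩ := ContinuousLinearMap.isUnit_iff_bijective.mpr h
  rw [← hu, Ring.inverse_unit]
  have h1 : ((↑(u⁻¹ * u) : EuclideanSpace ℝ (Fin n) →L[ℝ] EuclideanSpace ℝ (Fin n))) w = w := by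
    rw [inv_mul_cancel u, Units.val_one, ContinuousLinearMap.one_apply]
  rwa [Units.val_mul, ContinuousLinearMap.mul_apply] at h1

end Statement14Aux

/-- Theorem 3.4, superlinear case. Under the stated assumptions, the
linear Newton iteration `x^(k+1) = x^(k) − A_k⁻¹ F_ν(x^(k))`, `A_k ∈ ∂F_ν(x^(k))`
(equivalently `A_k (x^(k+1) − x^(k)) = −F_ν(x^(k))`), converges locally superlinearly to
the zero `x*` of `F_ν`. -/
theorem statement14 {n : ℕ} (f : EuclideanSpace ℝ (Fin n) → ℝ) (μ : ℝ) (hμ : 0 < μ)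
    (hf : ContDiff ℝ 2 f)
    (hstrong : ∀ x v : EuclideanSpace ℝ (Fin n), μ * ‖v‖ ^ 2 ≤ ⟪v, fderiv ℝ (gradient f) x v⟫)
    (g : EuclideanSpace ℝ (Fin n) → EReal)
    (hg_nebot : ∀ x, g x ≠ ⊥) (hg_proper : ∃ x, g x ≠ ⊤)
    (hg_closed : LowerSemicontinuous g)
    (hg_conv : ∀ x y : EuclideanSpace ℝ (Fin n), ∀ a b : ℝ, 0 ≤ a → 0 ≤ b → a + b = 1 →
      g (a • x + b • y) ≤ (a : EReal) * g x + (b : EReal) * g y)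
    (ν : ℝ) (hν : 0 < ν)
    (prox : EuclideanSpace ℝ (Fin n) → EuclideanSpace ℝ (Fin n))
    (hprox : ∀ w, IsMinOn
      (fun z => (ν : EReal) * g z + ((‖z - w‖ ^ 2 / 2 : ℝ) : EReal)) Set.univ (prox w))
    (xstar : EuclideanSpace ℝ (Fin n)) (hzero : Fnu f prox ν xstar = 0)
    (hnonempty : ∀ x, (DFnu f prox ν x).Nonempty)
    (hcompact : ∀ x, IsCompact (DFnu f prox ν x))
    (husc : ∀ ε > (0 : ℝ), ∃ δ > (0 : ℝ), ∀ y : EuclideanSpace ℝ (Fin n), ‖y - xstar‖ < δ →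
      ∀ U ∈ DFnu f prox ν y, ∃ U' ∈ DFnu f prox ν xstar, ‖U - U'‖ < ε)
    (hLNA : ∀ ε > (0 : ℝ), ∃ δ > (0 : ℝ), ∀ y : EuclideanSpace ℝ (Fin n), ‖y - xstar‖ < δ →
      ∀ A ∈ DFnu f prox ν y,
        ‖Fnu f prox ν xstar - Fnu f prox ν y - A (xstar - y)‖ ≤ ε * ‖xstar - y‖)
    (hnonsing : ∀ x : EuclideanSpace ℝ (Fin n), ∀ A ∈ DFnu f prox ν x, Function.Bijective A) :
    ∃ ε > (0 : ℝ), ∀ (x : ℕ → EuclideanSpace ℝ (Fin n))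
      (A : ℕ → (EuclideanSpace ℝ (Fin n) →L[ℝ] EuclideanSpace ℝ (Fin n))),
      ‖x 0 - xstar‖ < ε →
      (∀ k, A k ∈ DFnu f prox ν (x k)) →
      (∀ k, A k (x (k + 1) - x k) = -(Fnu f prox ν (x k))) →
      Tendsto x atTop (𝓝 xstar) ∧
      ∀ c > (0 : ℝ), ∀ᶠ k in atTop, ‖x (k + 1) - xstar‖ ≤ c * ‖x k - xstar‖ := by
  classical
  -- Step 1: a uniform bound on inverses over the compact set `DFnu f prox ν xstar`.
  obtain ⟨M0, hM0⟩ := (hcompact xstar).exists_bound_of_continuousOn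
    (f := fun A : EuclideanSpace ℝ (Fin n) →L[ℝ] EuclideanSpace ℝ (Fin n) => Ring.inverse A)
    (fun A hA => by
      have hU : IsUnit A :=
        ContinuousLinearMap.isUnit_iff_bijective.mpr (hnonsing xstar A hA)
      have := NormedRing.inverse_continuousAt hU.unit
      rw [hU.unit_spec] at this
      exact this.continuousWithinAt)
  set M : ℝ := max M0 1 with hMdef
  have hM1 : (1 : ℝ) ≤ M := le_max_right _ _
  have hMpos : (0 : ℝ) < M := lt_of_lt_of_le one_pos hM1
  have hM : ∀ A ∈ DFnu f prox ν xstar, ‖Ring.inverse A‖ ≤ M :=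
    fun A hA => (hM0 A hA).trans (le_max_left _ _)
  -- Step 2: near `xstar`, every `A ∈ DFnu f prox ν y` has inverse norm at most `2 * M`.
  obtain ⟨δ1, hδ1pos, hδ1⟩ := husc (1 / (2 * M)) (by positivity)
  have hinvbound : ∀ y : EuclideanSpace ℝ (Fin n), ‖y - xstar‖ < δ1 →
      ∀ A ∈ DFnu f prox ν y, ‖Ring.inverse A‖ ≤ 2 * M := by
    intro y hy A hA
    obtain ⟨A', hA', hAA'⟩ := hδ1 y hy A hA
    have hUA : IsUnit A := ContinuousLinearMap.isUnit_iff_bijective.mpr (hnonsing y A hA)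
    have hUA' : IsUnit A' := ContinuousLinearMap.isUnit_iff_bijective.mpr (hnonsing xstar A' hA')
    have hA'inv : ‖Ring.inverse A'‖ ≤ M := hM A' hA'
    rw [← hUA'.unit_spec, Ring.inverse_unit] at hA'inv
    have hd : ‖(↑hUA.unit : EuclideanSpace ℝ (Fin n) →L[ℝ] EuclideanSpace ℝ (Fin n))
        - ↑hUA'.unit‖ ≤ 1 / (2 * M) := by
      rw [hUA.unit_spec, hUA'.unit_spec]; exact le_of_lt hAA'
    have := statement14_inv_norm_bound hUA'.unit hUA.unit hMpos hA'inv hd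
    rwa [← hUA.unit_spec, Ring.inverse_unit]
  -- Step 3: the one-step contraction estimate.
  have hstep : ∀ c > (0 : ℝ), ∃ δ > (0 : ℝ), ∀ y : EuclideanSpace ℝ (Fin n), ‖y - xstar‖ < δ →
      ∀ A ∈ DFnu f prox ν y, ∀ z : EuclideanSpace ℝ (Fin n),
        A (z - y) = -(Fnu f prox ν y) → ‖z - xstar‖ ≤ c * ‖y - xstar‖ := by
    intro c hc
    obtain ⟨δ2, hδ2pos, hδ2⟩ := hLNA (c / (2 * M)) (by positivity)
    refine ⟨min δ1 δ2, lt_min hδ1pos hδ2pos, fun y hy A hA z hz => ?_⟩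
    have hy1 : ‖y - xstar‖ < δ1 := lt_of_lt_of_le hy (min_le_left _ _)
    have hy2 : ‖y - xstar‖ < δ2 := lt_of_lt_of_le hy (min_le_right _ _)
    have hbij : Function.Bijective A := hnonsing y A hA
    have heq : A (z - xstar) = Fnu f prox ν xstar - Fnu f prox ν y - A (xstar - y) := by
      have h1 : z - xstar = (z - y) + (y - xstar) := by abel
      rw [hzero, h1, map_add, hz, map_sub, map_sub]
      abel
    have hle1 : ‖A (z - xstar)‖ ≤ c / (2 * M) * ‖xstar - y‖ := by
      rw [heq]; exact hδ2 y hy2 A hA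
    have h2 : z - xstar = (Ring.inverse A) (A (z - xstar)) :=
      (statement14_inv_apply A hbij _).symm
    calc ‖z - xstar‖ = ‖(Ring.inverse A) (A (z - xstar))‖ := by rw [← h2]
      _ ≤ ‖Ring.inverse A‖ * ‖A (z - xstar)‖ := (Ring.inverse A).le_opNorm _
      _ ≤ (2 * M) * (c / (2 * M) * ‖xstar - y‖) :=
          mul_le_mul (hinvbound y hy1 A hA) hle1 (norm_nonneg _) (by positivity)
      _ = c * ‖y - xstar‖ := by
          rw [norm_sub_rev]; field_simp
  -- Step 4: conclude.
  obtain ⟨ε, hεpos, hε⟩ := hstep (1 / 2) (by norm_num)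
  refine ⟨ε, hεpos, fun x A hx0 hA hrec => ?_⟩
  have key : ∀ k, ‖x k - xstar‖ < ε ∧ ‖x k - xstar‖ ≤ (1 / 2) ^ k * ‖x 0 - xstar‖ := by
    intro k
    induction k with
    | zero => exact ⟨hx0, by simp⟩
    | succ k ih =>
      have h1 : ‖x (k + 1) - xstar‖ ≤ (1 / 2) * ‖x k - xstar‖ :=
        hε (x k) ih.1 (A k) (hA k) (x (k + 1)) (hrec k)
      have hn : (0 : ℝ) ≤ ‖x k - xstar‖ := norm_nonneg _
      constructor
      · linarith [ih.1]
      · have : (1 / 2 : ℝ) * ‖x k - xstar‖ ≤ (1 / 2) * ((1 / 2) ^ k * ‖x 0 - xstar‖) := by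
          have := ih.2; linarith
        rw [pow_succ]
        calc ‖x (k + 1) - xstar‖ ≤ (1 / 2) * ((1 / 2) ^ k * ‖x 0 - xstar‖) := h1.trans this
          _ = (1 / 2) ^ k * (1 / 2) * ‖x 0 - xstar‖ := by ring
  have hnorm0 : Tendsto (fun k => ‖x k - xstar‖) atTop (𝓝 0) := by
    have hgeom : Tendsto (fun k : ℕ => (1 / 2 : ℝ) ^ k * ‖x 0 - xstar‖) atTop (𝓝 0) := by
      have := (tendsto_pow_atTop_nhds_zero_of_lt_one (by norm_num : (0:ℝ) ≤ 1/2)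
        (by norm_num : (1/2 : ℝ) < 1)).mul_const ‖x 0 - xstar‖
      simpa using this
    exact squeeze_zero (fun k => norm_nonneg _) (fun k => (key k).2) hgeom
  have htend : Tendsto x atTop (𝓝 xstar) := by
    rw [tendsto_iff_norm_sub_tendsto_zero]
    exact hnorm0
  refine ⟨htend, fun c hc => ?_⟩
  obtain ⟨δc, hδcpos, hδc⟩ := hstep c hc
  have hev : ∀ᶠ k in atTop, ‖x k - xstar‖ < δc :=
    hnorm0.eventually (gt_mem_nhds hδcpos)
  filter_upwards [hev] with k hk
  exact hδc (x k) hk (A k) (hA k) (x (k + 1)) (hrec k)
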